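/- For s ∈ ℝ and a : ℤ² \ {0} → ℝ define N_s(a) = ( ∑_{k∈ℤ²\{0}} |k|^(2s) a_k² )^(1/2) ∈ [0, ∞], where |k| is the Euclidean norm. Let T > 0 and let χ_n, χ : [0,T] → (ℤ² \ {0} → ℝ) be such that t ↦ χ_n(t)_k and t ↦ χ(t)_k are measurable for every k and n. Assume: (i) for every δ ∈ (0,1], sup_{t∈[0,T]} N_{−δ}(χ(t)) < ∞ and ∫₀^T N_{1−δ}(χ(t))² dt < ∞, and likewise for each χ_n; (ii) for every δ ∈ (0,1], sup_{t∈[0,T]} N_{−δ}(χ_n(t) − χ(t)) → 0 and ∫₀^T N_{1−δ}(χ_n(t) − χ(t))² dt → 0 as n → ∞. Then for every β > 2 and γ ∈ [0,1) with βγ < 2, one has ∫₀^T N_γ(χ_n(t) − χ(t))^β dt → 0 as n → ∞. -/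

import Mathlib

open MeasureTheory Filter

/-- Euclidean norm of a lattice point `k ∈ ℤ²`. -/
noncomputable def latNorm (k : ℤ × ℤ) : ℝ := Real.sqrt ((k.1 : ℝ) ^ 2 + (k.2 : ℝ) ^ 2)

/-- The `H^s(𝕋²)` Sobolev norm (valued in `[0, ∞]`) of the zero-mean function with Fourier
coefficients `a_k`: `N_s(a) = (∑_{k∈ℤ²₀} |k|^(2s) a_k²)^(1/2)`. -/
noncomputable def sobNorm (s : ℝ) (a : {k : ℤ × ℤ // k ≠ 0} → ℝ) : ENNReal :=
  (∑' k : {k : ℤ × ℤ // k ≠ 0}, ENNReal.ofReal (latNorm k.1 ^ (2 * s) * a k ^ 2)) ^ ((1:ℝ)/2)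


lemma latNorm_pos {k : ℤ × ℤ} (hk : k ≠ 0) : 0 < latNorm k := by
  have h : k.1 ≠ 0 ∨ k.2 ≠ 0 := by
    by_contra h; push_neg at h; exact hk (Prod.ext h.1 h.2)
  have hpos : (0:ℝ) < (k.1:ℝ) ^ 2 + (k.2:ℝ) ^ 2 := by
    rcases h with h | h
    · have h1 : (k.1:ℝ) ≠ 0 := Int.cast_ne_zero.2 h
      positivity
    · have h2 : (k.2:ℝ) ≠ 0 := Int.cast_ne_zero.2 h
      positivity
  exact Real.sqrt_pos.2 hpos

lemma ofReal_interp (k : {k : ℤ × ℤ // k ≠ 0}) (a : ℝ) {γ δ θ : ℝ}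
    (hθ0 : 0 < θ) (hθ1 : θ < 1) (hγ : γ = (1 - θ) - δ) :
    ENNReal.ofReal (latNorm k.1 ^ (2 * γ) * a ^ 2) =
    (ENNReal.ofReal (latNorm k.1 ^ (2 * -δ) * a ^ 2)) ^ θ *
    (ENNReal.ofReal (latNorm k.1 ^ (2 * (1 - δ)) * a ^ 2)) ^ (1 - θ) := by
  have hL : 0 < latNorm k.1 := latNorm_pos k.2
  rcases eq_or_ne a 0 with rfl | ha
  · simp [ENNReal.zero_rpow_of_pos hθ0]
  · have ha2 : (0:ℝ) < a ^ 2 := by positivity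
    have h1 : (0:ℝ) < latNorm k.1 ^ (2 * -δ) * a ^ 2 := by positivity
    have h2 : (0:ℝ) < latNorm k.1 ^ (2 * (1 - δ)) * a ^ 2 := by positivity
    rw [ENNReal.ofReal_rpow_of_pos h1, ENNReal.ofReal_rpow_of_pos h2,
      ← ENNReal.ofReal_mul (by positivity)]
    congr 1
    rw [Real.mul_rpow (by positivity) (by positivity),
      Real.mul_rpow (by positivity) (by positivity),
      ← Real.rpow_mul hL.le, ← Real.rpow_mul hL.le,
      mul_mul_mul_comm, ← Real.rpow_add hL, ← Real.rpow_add ha2]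
    have e1 : θ + (1 - θ) = 1 := by ring
    have e2 : 2 * -δ * θ + 2 * (1 - δ) * (1 - θ) = 2 * γ := by rw [hγ]; ring
    rw [e1, e2, Real.rpow_one]

lemma sobNorm_interp (a : {k : ℤ × ℤ // k ≠ 0} → ℝ) {β γ δ : ℝ}
    (hβ : 2 < β) (hγ : γ = 2 / β - δ) :
    sobNorm γ a ^ β ≤ sobNorm (-δ) a ^ (β - 2) * sobNorm (1 - δ) a ^ (2:ℝ) := by
  have hβ0 : (0:ℝ) < β := by linarith
  set θ : ℝ := 1 - 2 / β with hθdef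
  have hθ0 : 0 < θ := by
    have : 2 / β < 1 := (div_lt_one hβ0).2 (by linarith)
    simp only [hθdef]; linarith
  have hθ1 : θ < 1 := by
    have : 0 < 2 / β := by positivity
    simp only [hθdef]; linarith
  have hγ' : γ = (1 - θ) - δ := by rw [hγ, hθdef]; ring
  set S0 : ENNReal := ∑' k : {k : ℤ × ℤ // k ≠ 0},
    ENNReal.ofReal (latNorm k.1 ^ (2 * -δ) * a k ^ 2) with hS0
  set S1 : ENNReal := ∑' k : {k : ℤ × ℤ // k ≠ 0},
    ENNReal.ofReal (latNorm k.1 ^ (2 * (1 - δ)) * a k ^ 2) with hS1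
  have hsum : (∑' k : {k : ℤ × ℤ // k ≠ 0}, ENNReal.ofReal (latNorm k.1 ^ (2 * γ) * a k ^ 2))
      ≤ S0 ^ θ * S1 ^ (1 - θ) := by
    have hmeas0 : AEMeasurable (fun k : {k : ℤ × ℤ // k ≠ 0} =>
        ENNReal.ofReal (latNorm k.1 ^ (2 * -δ) * a k ^ 2)) Measure.count :=
      (measurable_of_countable _).aemeasurable
    have hmeas1 : AEMeasurable (fun k : {k : ℤ × ℤ // k ≠ 0} =>
        ENNReal.ofReal (latNorm k.1 ^ (2 * (1 - δ)) * a k ^ 2)) Measure.count :=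
      (measurable_of_countable _).aemeasurable
    calc (∑' k : {k : ℤ × ℤ // k ≠ 0}, ENNReal.ofReal (latNorm k.1 ^ (2 * γ) * a k ^ 2))
        = ∫⁻ k, ENNReal.ofReal (latNorm k.1 ^ (2 * -δ) * a k ^ 2) ^ θ *
            ENNReal.ofReal (latNorm k.1 ^ (2 * (1 - δ)) * a k ^ 2) ^ (1 - θ)
            ∂(Measure.count) := by
          rw [lintegral_count]
          exact tsum_congr fun k => ofReal_interp k (a k) hθ0 hθ1 hγ'
      _ ≤ (∫⁻ k, ENNReal.ofReal (latNorm k.1 ^ (2 * -δ) * a k ^ 2) ∂(Measure.count)) ^ θ *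
            (∫⁻ k, ENNReal.ofReal (latNorm k.1 ^ (2 * (1 - δ)) * a k ^ 2)
              ∂(Measure.count)) ^ (1 - θ) :=
          ENNReal.lintegral_mul_norm_pow_le hmeas0 hmeas1 hθ0.le (by linarith) (by ring)
      _ = S0 ^ θ * S1 ^ (1 - θ) := by rw [lintegral_count, lintegral_count]
  have hmain : sobNorm γ a ^ β ≤ (S0 ^ θ * S1 ^ (1 - θ)) ^ (β / 2) := by
    rw [sobNorm, ← ENNReal.rpow_mul]
    have : (1:ℝ)/2 * β = β / 2 := by ring
    rw [this]
    exact ENNReal.rpow_le_rpow hsum (by positivity)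
  refine hmain.trans_eq ?_
  rw [ENNReal.mul_rpow_of_nonneg _ _ (by positivity), ← ENNReal.rpow_mul, ← ENNReal.rpow_mul]
  rw [sobNorm, sobNorm, ← ENNReal.rpow_mul, ← ENNReal.rpow_mul]
  congr 1
  · congr 1
    rw [hθdef]; field_simp; try ring
  · congr 1
    rw [hθdef]; try field_simp
    try ring
/-- Lemma 3.6 of the paper, on the Fourier side: if `χ_n → χ` in
`L^∞(0,T;H⁻(𝕋²)) ∩ L²(0,T;H^{1−}(𝕋²))` (with uniform bounds), then for every `β > 2` and
`γ ∈ [0,1)` with `βγ < 2`, `χ_n → χ` in `L^β(0,T;H^γ(𝕋²))`. -/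
theorem stmt_13 (T : ℝ) (hT : 0 < T)
    (χn : ℕ → ℝ → {k : ℤ × ℤ // k ≠ 0} → ℝ) (χ : ℝ → {k : ℤ × ℤ // k ≠ 0} → ℝ)
    (hmeasn : ∀ n k, Measurable fun t => χn n t k)
    (hmeas : ∀ k, Measurable fun t => χ t k)
    (hbound : ∀ δ : ℝ, δ ∈ Set.Ioc (0:ℝ) 1 →
      (⨆ t ∈ Set.Icc (0:ℝ) T, sobNorm (-δ) (χ t)) < ⊤ ∧
      (∫⁻ t in Set.Icc (0:ℝ) T, sobNorm (1 - δ) (χ t) ^ (2:ℝ)) < ⊤ ∧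
      ∀ n : ℕ, (⨆ t ∈ Set.Icc (0:ℝ) T, sobNorm (-δ) (χn n t)) < ⊤ ∧
        (∫⁻ t in Set.Icc (0:ℝ) T, sobNorm (1 - δ) (χn n t) ^ (2:ℝ)) < ⊤)
    (hconv : ∀ δ : ℝ, δ ∈ Set.Ioc (0:ℝ) 1 →
      Tendsto (fun n : ℕ => ⨆ t ∈ Set.Icc (0:ℝ) T,
          sobNorm (-δ) fun k => χn n t k - χ t k) atTop (nhds 0) ∧
      Tendsto (fun n : ℕ => ∫⁻ t in Set.Icc (0:ℝ) T,
          (sobNorm (1 - δ) fun k => χn n t k - χ t k) ^ (2:ℝ)) atTop (nhds 0))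
    (β γ : ℝ) (hβ : 2 < β) (hγ : γ ∈ Set.Ico (0:ℝ) 1) (hβγ : β * γ < 2) :
    Tendsto (fun n : ℕ => ∫⁻ t in Set.Icc (0:ℝ) T,
        (sobNorm γ fun k => χn n t k - χ t k) ^ β) atTop (nhds 0) := by
  obtain ⟨hγ0, hγ1⟩ := hγ
  have hβ0 : (0:ℝ) < β := by linarith
  set δ : ℝ := 2 / β - γ with hδdef
  have hδmem : δ ∈ Set.Ioc (0:ℝ) 1 := by
    constructor
    · have h1 : γ < 2 / β := by
        rw [lt_div_iff₀ hβ0]; nlinarith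
      simp only [hδdef]; linarith
    · have h2 : 2 / β < 1 := (div_lt_one hβ0).2 (by linarith)
      simp only [hδdef]; linarith
  have hγeq : γ = 2 / β - δ := by rw [hδdef]; ring
  obtain ⟨hA, hB⟩ := hconv δ hδmem
  have hev : ∀ᶠ n in atTop, (⨆ t ∈ Set.Icc (0:ℝ) T,
      sobNorm (-δ) fun k => χn n t k - χ t k) ≤ 1 :=
    (hA.eventually_lt_const (by norm_num : (0:ENNReal) < 1)).mono fun n h => h.le
  have hupper : ∀ᶠ n in atTop,
      (∫⁻ t in Set.Icc (0:ℝ) T, (sobNorm γ fun k => χn n t k - χ t k) ^ β) ≤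
      ∫⁻ t in Set.Icc (0:ℝ) T, (sobNorm (1 - δ) fun k => χn n t k - χ t k) ^ (2:ℝ) := by
    refine hev.mono fun n hn => ?_
    refine lintegral_mono_ae ?_
    filter_upwards [ae_restrict_mem measurableSet_Icc] with t ht
    calc (sobNorm γ fun k => χn n t k - χ t k) ^ β
        ≤ (sobNorm (-δ) fun k => χn n t k - χ t k) ^ (β - 2) *
          (sobNorm (1 - δ) fun k => χn n t k - χ t k) ^ (2:ℝ) :=
          sobNorm_interp _ hβ hγeq
      _ ≤ (1:ENNReal) ^ (β - 2) * (sobNorm (1 - δ) fun k => χn n t k - χ t k) ^ (2:ℝ) := by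
          exact mul_le_mul_left
            (ENNReal.rpow_le_rpow (le_trans (le_biSup _ ht) hn) (by linarith)) _
      _ = (sobNorm (1 - δ) fun k => χn n t k - χ t k) ^ (2:ℝ) := by
          rw [ENNReal.one_rpow, one_mul]
  exact tendsto_of_tendsto_of_tendsto_of_le_of_le' tendsto_const_nhds hB
    (Eventually.of_forall fun n => zero_le) hupper
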